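/- arXiv:2501.03234 — 2 statements merged into one kernel-verified Lean document; each statement's English description precedes it below -/
import Mathlib

section
/- If k is an odd prime, then S(k) ≡ 0 (mod 4) when k ≡ 1 (mod 4), and S(k) ≡ 2 (mod 4) when k ≡ 3 (mod 4). -/
open Finset

/-- `S(h,k) := ∑_{j=1}^{k-1} (-1)^{j+1+⌊hj/k⌋}` (here `h*j/k` is natural-number
division, which agrees with the floor of the rational `hj/k`). -/
def Spair (h k : ℕ) : ℤ := ∑ j ∈ Finset.Icc 1 (k - 1), (-1 : ℤ) ^ (j + 1 + h * j / k)

/-- `S(k) := ∑_{h=1}^{k-1} S(h,k)`. -/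
def Ssum (k : ℕ) : ℤ := ∑ h ∈ Finset.Icc 1 (k - 1), Spair h k

section lemmas
lemma negpow_congr (a b : ℕ) (h : a % 2 = b % 2) : ((-1:ℤ))^a = (-1)^b := by
  rw [← Nat.div_add_mod a 2, ← Nat.div_add_mod b 2, h, pow_add, pow_add, pow_mul, pow_mul,
    neg_one_sq, one_pow, one_pow]

lemma div_id {k h j : ℕ} (hk : k.Prime) (hh1 : 1 ≤ h) (hh2 : h ≤ k - 1)
    (hj1 : 1 ≤ j) (hj2 : j ≤ k - 1) :
    (k - h) * j / k = j - 1 - h * j / k := by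
  have kpos : 0 < k := hk.pos
  have hnd : ¬ k ∣ h * j := by
    intro hd
    rcases (Nat.Prime.dvd_mul hk).1 hd with h1 | h1
    · exact absurd (Nat.le_of_dvd (by omega) h1) (by omega)
    · exact absurd (Nat.le_of_dvd (by omega) h1) (by omega)
  have hdm : k * (h * j / k) + h * j % k = h * j := Nat.div_add_mod _ _
  set q := h * j / k with hq
  set r := h * j % k with hr
  have hrpos : 0 < r := by
    rcases Nat.eq_zero_or_pos r with h0 | h0
    · exact absurd (Nat.dvd_of_mod_eq_zero h0) hnd
    · exact h0
  have hrk : r < k := Nat.mod_lt _ kpos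
  have hqj : q < j := by
    rw [hq]
    exact Nat.div_lt_of_lt_mul (mul_lt_mul_of_pos_right (by omega) (by omega))
  have hkq : k * q + k ≤ k * j := by
    have h1 : k * (q + 1) ≤ k * j := Nat.mul_le_mul_left k hqj
    rw [Nat.mul_add, Nat.mul_one] at h1
    exact h1
  have e1 : (k - h) * j = k * j - h * j := by rw [Nat.sub_mul]
  have e2 : (j - 1 - q) * k = k * j - k - k * q := by
    rw [Nat.sub_mul, Nat.sub_mul, one_mul, Nat.mul_comm j k, Nat.mul_comm q k]
  have e : (k - h) * j = (k - r) + (j - 1 - q) * k := by omega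
  rw [e, Nat.add_mul_div_right _ _ kpos, Nat.div_eq_of_lt (by omega), Nat.zero_add]

lemma altsum {R : Type*} [Ring R] (n : ℕ) :
    ∑ j ∈ Finset.Icc 1 n, ((-1:R))^(j+1) = if Even n then 0 else 1 := by
  induction n with
  | zero => simp
  | succ n ih =>
    rw [Finset.sum_Icc_succ_top (by omega), ih]
    rcases Nat.even_or_odd n with he | ho
    · rw [if_pos he, if_neg (by simp [Nat.even_add_one, he]),
        Even.neg_one_pow (he.add_one.add_one)]
      norm_num
    · rw [if_neg (by simp [Nat.not_even_iff_odd.mpr ho]), if_pos ho.add_one,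
        Odd.neg_one_pow (ho.add_one.add_one)]
      norm_num

lemma key4 (j m : ℕ) : ((1 + (-1:ZMod 4)^(j+1)) * (-1)^m) = 1 + (-1:ZMod 4)^(j+1) := by
  rcases Nat.even_or_odd (j+1) with h | h <;> rcases Nat.even_or_odd m with h2 | h2 <;>
    simp [h.neg_one_pow, h2.neg_one_pow] <;> decide

lemma pair_eq {k h : ℕ} (hk : k.Prime) (hh1 : 1 ≤ h) (hh2 : h ≤ k - 1) :
    Spair h k + Spair (k - h) k
      = ∑ j ∈ Finset.Icc 1 (k-1), (1 + (-1:ℤ)^(j+1)) * (-1)^(j+1+h*j/k) := by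
  unfold Spair
  rw [← Finset.sum_add_distrib]
  apply Finset.sum_congr rfl
  intro j hj
  rw [Finset.mem_Icc] at hj
  rw [div_id hk hh1 hh2 hj.1 hj.2]
  have hqj : h * j / k < j :=
    Nat.div_lt_of_lt_mul (mul_lt_mul_of_pos_right (by omega) (by omega))
  rw [add_mul, one_mul, ← pow_add]
  congr 1
  exact negpow_congr _ _ (by omega)

lemma pair_zmod {k h : ℕ} (hk : k.Prime) (hodd : Odd k) (hh1 : 1 ≤ h) (hh2 : h ≤ k - 1) :
    ((Spair h k : ℤ) : ZMod 4) + ((Spair (k - h) k : ℤ) : ZMod 4) = ((k - 1 : ℕ) : ZMod 4) := by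
  rw [← Int.cast_add, pair_eq hk hh1 hh2]
  push_cast
  have h1 : ∀ j ∈ Finset.Icc 1 (k-1),
      (1 + (-1:ZMod 4)^(j+1)) * (-1)^(j+1+h*j/k) = 1 + (-1:ZMod 4)^(j+1) :=
    fun j _ => key4 j _
  rw [Finset.sum_congr rfl h1, Finset.sum_add_distrib, altsum, Finset.sum_const,
    Nat.card_Icc]
  have hev : Even (k - 1) := by
    obtain ⟨t, rfl⟩ := hodd
    exact ⟨t, by omega⟩
  rw [if_pos hev]
  simp
end lemmas

theorem stmt_8 (k : ℕ) (hk : k.Prime) (hodd : Odd k) :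
    (k % 4 = 1 → Ssum k % 4 = 0) ∧ (k % 4 = 3 → Ssum k % 4 = 2) := by
  have hk2 : k ≠ 2 := by rintro rfl; exact (by decide : ¬ Odd 2) hodd
  have hk3 : 3 ≤ k := by have := hk.two_le; omega
  obtain ⟨m, hkm⟩ : ∃ m, k = 2 * m + 1 := by
    obtain ⟨t, ht⟩ := hodd; exact ⟨t, by omega⟩
  have hm1 : 1 ≤ m := by omega
  have hsplit : Ssum k = ∑ h ∈ Finset.Icc 1 m, (Spair h k + Spair (k - h) k) := by
    rw [Finset.sum_add_distrib]
    have h1 : Ssum k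
        = (∑ h ∈ Finset.Icc 1 m, Spair h k) + ∑ h ∈ Finset.Icc (m+1) (k-1), Spair h k := by
      unfold Ssum
      rw [show (1:ℕ) = 0 + 1 from rfl, Finset.Icc_add_one_left_eq_Ioc, Nat.zero_add,
        Finset.Icc_add_one_left_eq_Ioc, show Icc 1 m = Ioc 0 m from Finset.Icc_add_one_left_eq_Ioc 0 m, Finset.sum_Ioc_consecutive _ (by omega) (by omega)]
    rw [h1]
    congr 1
    apply Finset.sum_nbij' (i := fun h => k - h) (j := fun h => k - h)
    · intro a ha; rw [Finset.mem_Icc] at *; omega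
    · intro a ha; rw [Finset.mem_Icc] at *; omega
    · intro a ha; rw [Finset.mem_Icc] at ha; omega
    · intro a ha; rw [Finset.mem_Icc] at ha; omega
    · intro a ha
      rw [Finset.mem_Icc] at ha
      congr 1
      omega
  have hcast : (Ssum k : ZMod 4) = (m : ZMod 4) * ((k - 1 : ℕ) : ZMod 4) := by
    rw [hsplit]
    push_cast
    have h2 : ∀ h' ∈ Finset.Icc 1 m,
        ((Spair h' k : ℤ) : ZMod 4) + ((Spair (k - h') k : ℤ) : ZMod 4)
          = ((k - 1 : ℕ) : ZMod 4) := by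
      intro h' hh
      rw [Finset.mem_Icc] at hh
      exact pair_zmod hk ⟨m, by omega⟩ hh.1 (by omega)
    rw [Finset.sum_congr rfl h2, Finset.sum_const, Nat.card_Icc, nsmul_eq_mul]
    norm_num
  have hk1 : ((k - 1 : ℕ) : ZMod 4) = 2 * (m : ZMod 4) := by
    rw [show k - 1 = 2 * m from by omega]
    push_cast
    ring
  constructor
  · intro h4
    obtain ⟨t, rfl⟩ : ∃ t, m = 2 * t := ⟨m / 2, by omega⟩
    have h0 : (Ssum k : ZMod 4) = 0 := by
      rw [hcast, hk1]
      push_cast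
      have h8 : (8 : ZMod 4) = 0 := by decide
      ring_nf
      rw [h8, mul_zero]
    have hdvd : ((4:ℕ):ℤ) ∣ Ssum k := (ZMod.intCast_zmod_eq_zero_iff_dvd _ 4).mp h0
    norm_num at hdvd
    omega
  · intro h4
    obtain ⟨t, rfl⟩ : ∃ t, m = 2 * t + 1 := ⟨m / 2, by omega⟩
    have h0 : ((Ssum k - 2 : ℤ) : ZMod 4) = 0 := by
      push_cast
      rw [hcast, hk1]
      push_cast
      have h8 : (8 : ZMod 4) = 0 := by decide
      ring_nf
      rw [h8]
      ring
    have hdvd : ((4:ℕ):ℤ) ∣ Ssum k - 2 := (ZMod.intCast_zmod_eq_zero_iff_dvd _ 4).mp h0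
    norm_num at hdvd
    omega
end

section
/- For every even positive integer k, T(k) = 2k - 1 - ∑_{1≤h≤2k-1, h≡2 (mod 4)} 2·gcd(h,k). -/
/-- `T(h,k) := ∑_{j=1}^{2k-1} (-1)^{j+1+⌊hj/k⌋}`. -/
def Tpair (h k : ℕ) : ℤ := ∑ j ∈ Finset.Icc 1 (2 * k - 1), (-1 : ℤ) ^ (j + 1 + h * j / k)

/-- `T(k) := ∑_{h=1}^{2k-1} T(h,k)`. -/
def Tsum (k : ℕ) : ℤ := ∑ h ∈ Finset.Icc 1 (2 * k - 1), Tpair h k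

/-- auxiliary gcd-sum -/
def Agcd (k : ℕ) : ℤ := ∑ i ∈ Finset.range k, (Nat.gcd (2 * i + 1) k : ℤ)

lemma neg_one_pow_congr' {m n : ℕ} (h : m % 2 = n % 2) : (-1 : ℤ) ^ m = (-1) ^ n := by
  rcases Nat.even_or_odd m with hm | hm
  · have hn : Even n := by rw [Nat.even_iff] at *; omega
    rw [hm.neg_one_pow, hn.neg_one_pow]
  · have hn : Odd n := by rw [Nat.odd_iff] at *; omega
    rw [hm.neg_one_pow, hn.neg_one_pow]

lemma sum_split (f : ℕ → ℤ) {k : ℕ} (hk : 0 < k) :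
    ∑ j ∈ Finset.Icc 1 (2 * k - 1), f j
      = (∑ j ∈ Finset.Icc 1 (k - 1), (f j + f (j + k))) + f k := by
  obtain ⟨m, rfl⟩ : ∃ m, k = m + 1 := ⟨k - 1, by omega⟩
  have e1 : 2 * (m + 1) - 1 = m + (m + 1) := by omega
  have e2 : (m + 1) - 1 = m := by omega
  rw [e1, e2, (by exact Finset.Icc_add_one_left_eq_Ioc 0 (m + (m + 1)) : Finset.Icc 1 (m + (m + 1)) = Finset.Ioc 0 (m + (m + 1))),
    (by exact Finset.Icc_add_one_left_eq_Ioc 0 m : Finset.Icc 1 m = Finset.Ioc 0 m)]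
  rw [← Finset.sum_Ioc_consecutive f (Nat.zero_le (m + 1)) (by omega : m + 1 ≤ m + (m + 1))]
  have h4 : ∑ j ∈ Finset.Ioc 0 (m + 1), f j = (∑ j ∈ Finset.Ioc 0 m, f j) + f (m + 1) :=
    Finset.sum_Ioc_succ_top (Nat.zero_le m) f
  have h3 : ∑ j ∈ Finset.Ioc (m + 1) (m + (m + 1)), f j
      = ∑ j ∈ Finset.Ioc 0 m, f (j + (m + 1)) := by
    have hmap := Finset.map_add_right_Ioc 0 m (m + 1)
    rw [zero_add] at hmap
    rw [← hmap, Finset.sum_map]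
    rfl
  rw [h4, h3, Finset.sum_add_distrib]
  ring

lemma sum_reflect (f : ℕ → ℤ) (k : ℕ) :
    ∑ j ∈ Finset.Icc 1 (k - 1), f (k - j) = ∑ j ∈ Finset.Icc 1 (k - 1), f j := by
  apply Finset.sum_nbij' (fun j => k - j) (fun j => k - j)
  · intro a ha; simp only [Finset.mem_Icc] at *; omega
  · intro a ha; simp only [Finset.mem_Icc] at *; omega
  · intro a ha; simp only [Finset.mem_Icc] at *; omega
  · intro a ha; simp only [Finset.mem_Icc] at *; omega
  · intro a _; rfl

lemma parity_split (f : ℕ → ℤ) (n : ℕ) (hn : 0 < n) :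
    ∑ h ∈ Finset.Icc 1 (2 * n - 1), f h
      = ∑ i ∈ Finset.range n, f (2 * i + 1) + ∑ i ∈ Finset.Icc 1 (n - 1), f (2 * i) := by
  obtain ⟨m, rfl⟩ : ∃ m, n = m + 1 := ⟨n - 1, by omega⟩
  clear hn
  induction m with
  | zero => simp
  | succ m ih =>
    have e1 : 2 * (m + 1 + 1) - 1 = (2 * (m + 1) - 1) + 1 + 1 := by omega
    have e2 : (2 * (m + 1) - 1) + 1 = 2 * (m + 1) := by omega
    have e3 : (m + 1 + 1) - 1 = m + 1 := by omega
    rw [e1, Finset.sum_Icc_succ_top (by omega) f, Finset.sum_Icc_succ_top (by omega) f, ih,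
      e2, e3, Finset.sum_range_succ, Finset.sum_range_succ, Finset.sum_range_succ,
      Finset.sum_Icc_succ_top (by omega : 1 ≤ m + 1) (fun i => f (2 * i)),
      show m + 1 - 1 = m from rfl]
    ring

lemma Tpair_eq_one {h k : ℕ} (hk : 0 < k) (hpar : (h + k) % 2 = 1) : Tpair h k = 1 := by
  unfold Tpair
  rw [sum_split _ hk]
  have hterm : ∀ j ∈ Finset.Icc 1 (k - 1),
      ((-1 : ℤ) ^ (j + 1 + h * j / k) + (-1) ^ ((j + k) + 1 + h * (j + k) / k)) = 0 := by
    intro j _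
    have hdiv : h * (j + k) / k = h * j / k + h := by
      rw [Nat.mul_add, Nat.add_mul_div_right _ _ hk]
    rw [hdiv]
    generalize h * j / k = x
    have he : (-1 : ℤ) ^ (j + k + 1 + (x + h)) = (-1) ^ ((j + 1 + x) + 1) :=
      neg_one_pow_congr' (by omega)
    rw [he, pow_succ]
    ring
  rw [Finset.sum_eq_zero hterm, Nat.mul_div_cancel _ hk]
  have he : (-1 : ℤ) ^ (k + 1 + h) = (-1) ^ 0 := neg_one_pow_congr' (by omega)
  rw [he, pow_zero, zero_add]

lemma Tpair_even_even {h k : ℕ} (hk : 0 < k) :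
    Tpair (2 * h) (2 * k) = 2 * Tpair h k - 1 := by
  unfold Tpair
  rw [sum_split _ (by omega : 0 < 2 * k)]
  have hterm : ∀ j ∈ Finset.Icc 1 (2 * k - 1),
      ((-1 : ℤ) ^ (j + 1 + 2 * h * j / (2 * k))
        + (-1) ^ ((j + 2 * k) + 1 + 2 * h * (j + 2 * k) / (2 * k)))
      = 2 * (-1 : ℤ) ^ (j + 1 + h * j / k) := by
    intro j _
    have hd1 : 2 * h * j / (2 * k) = h * j / k := by
      rw [show 2 * h * j = 2 * (h * j) from by ring, Nat.mul_div_mul_left _ _ (by omega)]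
    have hd2 : 2 * h * (j + 2 * k) / (2 * k) = h * j / k + 2 * h := by
      rw [show 2 * h * (j + 2 * k) = 2 * (h * j + (2 * h) * k) from by ring,
        show 2 * k = 2 * k from rfl, Nat.mul_div_mul_left _ _ (by omega : 0 < 2),
        Nat.add_mul_div_right _ _ hk]
    rw [hd1, hd2]
    generalize h * j / k = x
    have he : (-1 : ℤ) ^ (j + 2 * k + 1 + (x + 2 * h)) = (-1) ^ (j + 1 + x) :=
      neg_one_pow_congr' (by omega)
    rw [he]
    ring
  rw [Finset.sum_congr rfl hterm, ← Finset.mul_sum, Nat.mul_div_cancel _ (by omega : 0 < 2 * k)]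
  have he : (-1 : ℤ) ^ (2 * k + 1 + 2 * h) = (-1) ^ 1 := neg_one_pow_congr' (by omega)
  rw [he, pow_one]
  ring

lemma Tpair_odd_odd {h k : ℕ} (hh : h % 2 = 1) (hkk : k % 2 = 1) :
    Tpair h k = 1 - 2 * (Nat.gcd h k : ℤ) := by
  have hk : 0 < k := by omega
  have hh0 : 0 < h := by omega
  set g := Nat.gcd h k with hg
  have hg0 : 0 < g := Nat.gcd_pos_of_pos_left _ hh0
  set a := h / g with ha
  set b := k / g with hb
  have hha : g * a = h := Nat.mul_div_cancel' (Nat.gcd_dvd_left h k)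
  have hkb : g * b = k := Nat.mul_div_cancel' (Nat.gcd_dvd_right h k)
  have hco : Nat.Coprime a b := Nat.coprime_div_gcd_div_gcd hg0
  have hb0 : 0 < b := by
    rcases Nat.eq_zero_or_pos b with h0 | h0
    · rw [h0, Nat.mul_zero] at hkb; omega
    · exact h0
  have hao : a % 2 = 1 := by
    rcases Nat.mod_two_eq_zero_or_one a with h2 | h2
    · exfalso
      have : h % 2 = 0 := by rw [← hha, Nat.mul_mod, h2, Nat.mul_zero, Nat.zero_mod]
      omega
    · exact h2
  have hbo : b % 2 = 1 := by
    rcases Nat.mod_two_eq_zero_or_one b with h2 | h2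
    · exfalso
      have : k % 2 = 0 := by rw [← hkb, Nat.mul_mod, h2, Nat.mul_zero, Nat.zero_mod]
      omega
    · exact h2
  have heab : Even (a + b) := by rw [Nat.even_iff]; omega
  unfold Tpair
  rw [sum_split _ hk]
  have hterm : ∀ j ∈ Finset.Icc 1 (k - 1),
      ((-1 : ℤ) ^ (j + 1 + h * j / k) + (-1) ^ ((j + k) + 1 + h * (j + k) / k))
        = 2 * (-1 : ℤ) ^ (j + 1 + h * j / k) := by
    intro j _
    have hdiv : h * (j + k) / k = h * j / k + h := by
      rw [Nat.mul_add, Nat.add_mul_div_right _ _ hk]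
    rw [hdiv]
    generalize h * j / k = x
    have he : (-1 : ℤ) ^ (j + k + 1 + (x + h)) = (-1) ^ (j + 1 + x) :=
      neg_one_pow_congr' (by omega)
    rw [he]
    ring
  rw [Finset.sum_congr rfl hterm, ← Finset.mul_sum, Nat.mul_div_cancel _ hk]
  -- the reflected sum
  have hrefl : ∑ j ∈ Finset.Icc 1 (k - 1), (-1 : ℤ) ^ ((k - j) + 1 + h * (k - j) / k)
      = ∑ j ∈ Finset.Icc 1 (k - 1), (-1 : ℤ) ^ (j + 1 + h * j / k) :=
    sum_reflect (fun j => (-1 : ℤ) ^ (j + 1 + h * j / k)) k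
  have hpair : ∀ j ∈ Finset.Icc 1 (k - 1),
      ((-1 : ℤ) ^ (j + 1 + h * j / k) + (-1 : ℤ) ^ ((k - j) + 1 + h * (k - j) / k))
        = if b ∣ j then 2 * (-1 : ℤ) ^ (j + 1 + h * j / k) else 0 := by
    intro j hj
    simp only [Finset.mem_Icc] at hj
    obtain ⟨q, r, hqr, hrk⟩ : ∃ q r, h * j = k * q + r ∧ r < k :=
      ⟨h * j / k, h * j % k, (Nat.div_add_mod _ _).symm, Nat.mod_lt _ hk⟩
    have hdq : h * j / k = q := by
      rw [hqr, Nat.mul_add_div hk, Nat.div_eq_of_lt hrk, add_zero]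
    have hqrz : (h : ℤ) * j = (k : ℤ) * q + r := by exact_mod_cast hqr
    have hjk : h * j ≤ h * (k - 1) := Nat.mul_le_mul_left h (by omega)
    have hk1 : h * (k - 1) + h = h * k := by
      have e : (k - 1) + 1 = k := by omega
      calc h * (k - 1) + h = h * ((k - 1) + 1) := by ring
        _ = h * k := by rw [e]
    have hqh : q + 1 ≤ h := by
      by_contra hc
      push_neg at hc
      have h5 : k * h ≤ k * q := Nat.mul_le_mul_left k (by omega)
      have h6 : k * h = h * k := Nat.mul_comm k h
      omega
    have hmodr : h * j % k = r := by rw [hqr, Nat.mul_add_mod, Nat.mod_eq_of_lt hrk]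
    have hdvd_iff : (b ∣ j) ↔ r = 0 := by
      constructor
      · intro ⟨c, hc⟩
        have hkd : k ∣ h * j := ⟨a * c, by rw [← hha, ← hkb, hc]; ring⟩
        have h9 : h * j % k = 0 := Nat.mod_eq_zero_of_dvd hkd
        omega
      · intro hr0
        have hkd : k ∣ h * j := Nat.dvd_of_mod_eq_zero (by omega)
        have h7 : g * b ∣ g * (a * j) := by
          rw [hkb, show g * (a * j) = (g * a) * j from by ring, hha]; exact hkd
        have h8 : b ∣ a * j := (Nat.mul_dvd_mul_iff_left hg0).mp h7
        exact (Nat.Coprime.dvd_of_dvd_mul_left hco.symm h8)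
    by_cases hr0 : r = 0
    · subst hr0
      have hkey : h * (k - j) = k * (h - q) := by
        zify [show j ≤ k from by omega, show q ≤ h from by omega]
        linear_combination -hqrz
      have hdiv2 : h * (k - j) / k = h - q := by
        rw [hkey, Nat.mul_div_cancel_left _ hk]
      rw [hdq, hdiv2, if_pos (hdvd_iff.mpr rfl)]
      have he : (-1 : ℤ) ^ ((k - j) + 1 + (h - q)) = (-1) ^ (j + 1 + q) :=
        neg_one_pow_congr' (by omega)
      rw [he]
      ring
    · have hkey : h * (k - j) = k * (h - q - 1) + (k - r) := by
        zify [show j ≤ k from by omega, show q ≤ h from by omega,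
          show 1 ≤ h - q from by omega, show r ≤ k from by omega]
        linear_combination -hqrz
      have hdiv2 : h * (k - j) / k = h - q - 1 := by
        rw [hkey, Nat.mul_add_div hk, Nat.div_eq_of_lt (by omega : k - r < k), add_zero]
      rw [hdq, hdiv2, if_neg (fun hd => hr0 (hdvd_iff.mp hd))]
      have he : (-1 : ℤ) ^ ((k - j) + 1 + (h - q - 1)) = (-1) ^ ((j + 1 + q) + 1) :=
        neg_one_pow_congr' (by omega)
      rw [he, pow_succ]
      ring
  have hfil : ∑ j ∈ (Finset.Icc 1 (k - 1)).filter (fun j => b ∣ j),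
      (2 * (-1 : ℤ) ^ (j + 1 + h * j / k)) = ∑ t ∈ Finset.Icc 1 (g - 1), (-2 : ℤ) := by
    apply Finset.sum_nbij' (fun j => j / b) (fun t => t * b)
    · intro j hj
      simp only [Finset.mem_filter, Finset.mem_Icc] at hj
      obtain ⟨⟨hj1, hj2⟩, c, rfl⟩ := hj
      have hc1 : 1 ≤ c := by
        rcases Nat.eq_zero_or_pos c with h0 | h0
        · rw [h0, Nat.mul_zero] at hj1; omega
        · exact h0
      have hcg : c < g := by
        have h1 : b * c < b * g := by
          calc b * c ≤ k - 1 := hj2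
            _ < k := by omega
            _ = b * g := by rw [← hkb]; ring
        exact Nat.lt_of_mul_lt_mul_left h1
      rw [Nat.mul_div_cancel_left c hb0]
      simp only [Finset.mem_Icc]
      omega
    · intro t ht
      simp only [Finset.mem_Icc] at ht
      simp only [Finset.mem_filter, Finset.mem_Icc]
      refine ⟨⟨Nat.one_le_iff_ne_zero.mpr (Nat.mul_ne_zero (by omega) (by omega)), ?_⟩,
        dvd_mul_left b t⟩
      have h1 : t * b ≤ (g - 1) * b := Nat.mul_le_mul_right b ht.2
      have h2 : (g - 1) * b = g * b - b := by rw [Nat.sub_mul, Nat.one_mul]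
      omega
    · intro j hj
      simp only [Finset.mem_filter, Finset.mem_Icc] at hj
      exact Nat.div_mul_cancel hj.2
    · intro t _
      exact Nat.mul_div_cancel t hb0
    · intro j hj
      simp only [Finset.mem_filter, Finset.mem_Icc] at hj
      obtain ⟨⟨hj1, hj2⟩, c, rfl⟩ := hj
      have hd : h * (b * c) / k = a * c := by
        rw [show h * (b * c) = k * (a * c) from by rw [← hha, ← hkb]; ring,
          Nat.mul_div_cancel_left _ hk]
      rw [hd]
      have hodd : Odd (b * c + 1 + a * c) := by
        have e : b * c + 1 + a * c = (a + b) * c + 1 := by ring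
        rw [e]
        exact (heab.mul_right c).add_one
      rw [hodd.neg_one_pow]
      ring
  have key2 : ∑ j ∈ Finset.Icc 1 (k - 1),
      ((-1 : ℤ) ^ (j + 1 + h * j / k) + (-1 : ℤ) ^ ((k - j) + 1 + h * (k - j) / k))
        = -2 * ((g : ℤ) - 1) := by
    rw [Finset.sum_congr rfl hpair, ← Finset.sum_filter, hfil, Finset.sum_const, Nat.card_Icc]
    rw [show g - 1 + 1 - 1 = g - 1 from by omega, nsmul_eq_mul]
    push_cast [Nat.cast_sub hg0]
    ring
  have key : 2 * ∑ j ∈ Finset.Icc 1 (k - 1), (-1 : ℤ) ^ (j + 1 + h * j / k)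
      = -2 * ((g : ℤ) - 1) := by
    rw [two_mul]
    nth_rewrite 2 [← hrefl]
    rw [← Finset.sum_add_distrib]
    exact key2
  rw [key]
  have he : (-1 : ℤ) ^ (k + 1 + h) = (-1) ^ 1 := neg_one_pow_congr' (by omega)
  rw [he, pow_one]
  ring

lemma Agcd_two (n : ℕ) : Agcd (2 * n) = 2 * Agcd n := by
  unfold Agcd
  have hcop : ∀ i : ℕ, Nat.Coprime 2 (2 * i + 1) := by
    intro i
    rw [Nat.Coprime, Nat.gcd_rec, show (2 * i + 1) % 2 = 1 from by omega, Nat.gcd_one_left]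
  have h1 : ∀ i ∈ Finset.range (2 * n), (Nat.gcd (2 * i + 1) (2 * n) : ℤ)
      = (Nat.gcd (2 * i + 1) n : ℤ) := by
    intro i _
    rw [Nat.Coprime.gcd_mul_left_cancel_right n (hcop i)]
  rw [Finset.sum_congr rfl h1, two_mul n, Finset.sum_range_add]
  have h2 : ∀ i ∈ Finset.range n, (Nat.gcd (2 * (n + i) + 1) n : ℤ)
      = (Nat.gcd (2 * i + 1) n : ℤ) := by
    intro i _
    rw [show 2 * (n + i) + 1 = (2 * i + 1) + n * 2 from by ring, Nat.gcd_add_mul_left_left]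
  rw [Finset.sum_congr rfl h2, two_mul]

lemma Tsum_rec (n : ℕ) (hn : 0 < n) : Tsum (2 * n) = 1 + 2 * Tsum n := by
  unfold Tsum
  rw [parity_split _ (2 * n) (by omega)]
  have h1 : ∀ i ∈ Finset.range (2 * n), Tpair (2 * i + 1) (2 * n) = 1 :=
    fun i _ => Tpair_eq_one (by omega) (by omega)
  have h2 : ∀ i ∈ Finset.Icc 1 (2 * n - 1), Tpair (2 * i) (2 * n) = 2 * Tpair i n - 1 :=
    fun i _ => Tpair_even_even hn
  rw [Finset.sum_congr rfl h1, Finset.sum_congr rfl h2, Finset.sum_const, Finset.card_range,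
    Finset.sum_sub_distrib, ← Finset.mul_sum, Finset.sum_const, Nat.card_Icc,
    show 2 * n - 1 + 1 - 1 = 2 * n - 1 from by omega, nsmul_eq_mul, nsmul_eq_mul, mul_one,
    mul_one]
  push_cast [Nat.cast_sub (by omega : 1 ≤ 2 * n)]
  ring

lemma Tsum_formula : ∀ k, 0 < k → Tsum k = 2 * (k : ℤ) - 1 - 2 * Agcd k := by
  intro k
  induction k using Nat.strong_induction_on with
  | _ k ih =>
    intro hk
    rcases Nat.even_or_odd k with he | ho
    · obtain ⟨n, rfl⟩ : ∃ n, k = 2 * n := ⟨k / 2, by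
        rcases he with ⟨t, ht⟩; omega⟩
      have hn : 0 < n := by omega
      rw [Tsum_rec n hn, ih n (by omega) hn, Agcd_two]
      push_cast
      ring
    · have hko : k % 2 = 1 := Nat.odd_iff.mp ho
      unfold Tsum
      rw [parity_split _ k hk]
      have h1 : ∀ i ∈ Finset.range k, Tpair (2 * i + 1) k = 1 - 2 * (Nat.gcd (2 * i + 1) k : ℤ) :=
        fun i _ => Tpair_odd_odd (by omega) hko
      have h2 : ∀ i ∈ Finset.Icc 1 (k - 1), Tpair (2 * i) k = 1 :=
        fun i _ => Tpair_eq_one hk (by omega)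
      rw [Finset.sum_congr rfl h1, Finset.sum_congr rfl h2, Finset.sum_sub_distrib,
        Finset.sum_const, Finset.sum_const, Finset.card_range, Nat.card_Icc,
        show k - 1 + 1 - 1 = k - 1 from by omega, nsmul_eq_mul, nsmul_eq_mul, mul_one, mul_one,
        ← Finset.mul_sum]
      unfold Agcd
      push_cast [Nat.cast_sub (by omega : 1 ≤ k)]
      ring

lemma filter_sum (n : ℕ) (hn : 0 < n) :
    ∑ h ∈ (Finset.Icc 1 (2 * (2 * n) - 1)).filter (fun h => h % 4 = 2),
        2 * (Nat.gcd h (2 * n) : ℤ) = 4 * Agcd n := by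
  unfold Agcd
  rw [show (4 : ℤ) * ∑ i ∈ Finset.range n, (Nat.gcd (2 * i + 1) n : ℤ)
      = ∑ i ∈ Finset.range n, 4 * (Nat.gcd (2 * i + 1) n : ℤ) from by rw [Finset.mul_sum]]
  apply Finset.sum_nbij' (fun h => (h - 2) / 4) (fun t => 4 * t + 2)
  · intro j hj
    simp only [Finset.mem_filter, Finset.mem_Icc] at hj
    simp only [Finset.mem_range]
    omega
  · intro t ht
    simp only [Finset.mem_range] at ht
    simp only [Finset.mem_filter, Finset.mem_Icc]
    omega
  · intro j hj
    simp only [Finset.mem_filter, Finset.mem_Icc] at hj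
    omega
  · intro t ht
    simp only [Finset.mem_range] at ht
    omega
  · intro j hj
    simp only [Finset.mem_filter, Finset.mem_Icc] at hj
    have e : j = 2 * (2 * ((j - 2) / 4) + 1) := by omega
    rw [show Nat.gcd j (2 * n) = Nat.gcd (2 * (2 * ((j - 2) / 4) + 1)) (2 * n) from by rw [← e],
      Nat.gcd_mul_left]
    push_cast
    ring

theorem stmt_17 (k : ℕ) (hk : 0 < k) (heven : Even k) :
    Tsum k = 2 * (k : ℤ) - 1 -
      ∑ h ∈ (Finset.Icc 1 (2 * k - 1)).filter (fun h => h % 4 = 2),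
        2 * (Nat.gcd h k : ℤ) := by
  obtain ⟨n, rfl⟩ : ∃ n, k = 2 * n := ⟨k / 2, by rcases heven with ⟨t, ht⟩; omega⟩
  have hn : 0 < n := by omega
  rw [Tsum_formula _ hk, filter_sum n hn, Agcd_two]
  push_cast
  ring
end
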